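/- Let S be a commutative semiring, k, n, ℓ ∈ ℕ with 1 ≤ ℓ ≤ n, and M : Fin k → Fin n → S. Then perm'(M) = Σ_{i=0}^{k} perm'(A_i) · perm'(B_i), where A_i : Fin i → Fin ℓ → S is the top-left submatrix given by A_i a b = M a b (via the natural inclusions Fin i ⊆ Fin k and Fin ℓ ⊆ Fin n), and B_i : Fin (k−i) → Fin (n−ℓ) → S is the bottom-right submatrix given by B_i a b = M (i + a) (ℓ + b). -/

import Mathlib

open scoped Classical

noncomputable def perm' {S : Type*} [CommSemiring S] {k n : ℕ} (M : Fin k → Fin n → S) : S :=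
  ∑ f ∈ Finset.univ.filter (fun f : Fin k → Fin n => StrictMono f), ∏ i, M i (f i)

private lemma lower_card {k : ℕ} (T : Finset (Fin k))
    (hT : ∀ a b : Fin k, a ≤ b → b ∈ T → a ∈ T) (a : Fin k) :
    a ∈ T ↔ a.val < T.card := by
  constructor
  · intro ha
    have hsub : Finset.Iic a ⊆ T := fun b hb => hT b a (Finset.mem_Iic.mp hb) ha
    have := Finset.card_le_card hsub
    rw [Fin.card_Iic] at this
    omega
  · intro h
    by_contra ha
    have hsub : T ⊆ Finset.Iio a := by
      intro b hb
      rw [Finset.mem_Iio]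
      rcases lt_or_ge b a with hba | hab
      · exact hba
      · exact absurd (hT a b hab hb) ha
    have := Finset.card_le_card hsub
    rw [Fin.card_Iio] at this
    omega

private lemma card_lt_filter {k : ℕ} (i0 : ℕ) (hik : i0 ≤ k) :
    (Finset.univ.filter (fun a : Fin k => a.val < i0)).card = i0 := by
  have : Finset.univ.filter (fun a : Fin k => a.val < i0)
      = Finset.map (Fin.castLEEmb hik) Finset.univ := by
    ext a
    simp only [Finset.mem_filter, Finset.mem_univ, true_and, Finset.mem_map,
      Fin.castLEEmb_apply]
    constructor
    · intro h
      exact ⟨⟨a.val, h⟩, Fin.ext rfl⟩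
    · rintro ⟨b, -, rfl⟩
      exact b.isLt
  rw [this, Finset.card_map]
  simp

private lemma prod_split {S : Type*} [CommMonoid S] {k : ℕ} (m : ℕ) (hm : m ≤ k)
    (φ : Fin k → S) :
    ∏ a, φ a = (∏ a : Fin m, φ (Fin.castLE hm a)) *
      ∏ a : Fin (k - m), φ ⟨m + a.val, by have := a.isLt; exact Nat.add_lt_of_lt_sub' this⟩ := by
  have hk : m + (k - m) = k := by omega
  rw [← Fin.prod_congr' φ hk, Fin.prod_univ_add]
  rfl

/-- The function built from a pair of strictly monotone functions. -/
private def toFun {k n ℓ : ℕ} (h2 : ℓ ≤ n) (i0 : ℕ)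
    (p : (Fin i0 → Fin ℓ) × (Fin (k - i0) → Fin (n - ℓ))) : Fin k → Fin n :=
  fun a => if ha : a.val < i0 then Fin.castLE h2 (p.1 ⟨a.val, ha⟩)
    else ⟨ℓ + (p.2 ⟨a.val - i0, by have := a.isLt; omega⟩).val, by
      have := (p.2 ⟨a.val - i0, by have := a.isLt; omega⟩).isLt; omega⟩

private lemma fiber_eq {S : Type*} [CommSemiring S] {k n ℓ : ℕ}
    (h1 : 1 ≤ ℓ) (h2 : ℓ ≤ n) (M : Fin k → Fin n → S) (i0 : ℕ) (hik : i0 ≤ k) :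
    ∑ f ∈ (Finset.univ.filter (fun f : Fin k → Fin n => StrictMono f)).filter
        (fun f => (Finset.univ.filter (fun a => (f a).val < ℓ)).card = i0),
      ∏ a, M a (f a)
    = (∑ g ∈ Finset.univ.filter (fun g : Fin i0 → Fin ℓ => StrictMono g),
        ∏ a, M (Fin.castLE hik a) (Fin.castLE h2 (g a))) *
      (∑ h ∈ Finset.univ.filter (fun h : Fin (k - i0) → Fin (n - ℓ) => StrictMono h),
        ∏ a, M ⟨i0 + a.val, by have := a.isLt; omega⟩ ⟨ℓ + (h a).val, by have := (h a).isLt; exact Nat.add_lt_of_lt_sub' this⟩) := by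
  rw [Finset.sum_mul_sum, ← Finset.sum_product']
  symm
  -- fiber membership characterization
  have key : ∀ f : Fin k → Fin n, StrictMono f →
      (Finset.univ.filter (fun a => (f a).val < ℓ)).card = i0 →
      ∀ a : Fin k, ((f a).val < ℓ ↔ a.val < i0) := by
    intro f hf hc a
    have hl := lower_card (Finset.univ.filter (fun a => (f a).val < ℓ))
      (fun a b hab hb => by
        simp only [Finset.mem_filter, Finset.mem_univ, true_and] at hb ⊢
        have : f a ≤ f b := hf.monotone hab
        exact lt_of_le_of_lt (Fin.le_iff_val_le_val.mp this) hb) a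
    simp only [Finset.mem_filter, Finset.mem_univ, true_and, hc] at hl
    exact hl
  refine Finset.sum_bij' (fun p _ => toFun h2 i0 p)
    (fun f hf => (fun a => ⟨(f (Fin.castLE hik a)).val, ?_⟩,
                  fun a => ⟨(f ⟨i0 + a.val, by have := a.isLt; omega⟩).val - ℓ, ?_⟩))
    ?_ ?_ ?_ ?_ ?_
  · -- g bound: (f (castLE a)).val < ℓ
    simp only [Finset.mem_filter, Finset.mem_univ, true_and] at hf
    exact (key f hf.1 hf.2 _).mpr a.isLt
  · -- h bound
    simp only [Finset.mem_filter, Finset.mem_univ, true_and] at hf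
    have h1' := (key f hf.1 hf.2 ⟨i0 + a.val, by have := a.isLt; omega⟩).not
    simp only [not_lt] at h1'
    have hge : ℓ ≤ (f ⟨i0 + a.val, by have := a.isLt; omega⟩).val := h1'.mpr (by simp)
    have hlt := (f ⟨i0 + a.val, by have := a.isLt; omega⟩).isLt
    omega
  · -- toFun p ∈ fiber
    intro p hp
    simp only [Finset.mem_product, Finset.mem_filter, Finset.mem_univ, true_and] at hp
    obtain ⟨hg, hh⟩ := hp
    have hval : ∀ a : Fin k, ((toFun h2 i0 p a).val < ℓ ↔ a.val < i0) := by
      intro a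
      by_cases ha : a.val < i0
      · simp only [toFun, dif_pos ha]
        exact ⟨fun _ => ha, fun _ => (p.1 ⟨a.val, ha⟩).isLt⟩
      · simp only [toFun, dif_neg ha]
        constructor
        · intro h; omega
        · intro h; exact absurd h ha
    have hsm : StrictMono (toFun h2 i0 p) := by
      intro a b hab
      have hab' : a.val < b.val := hab
      rw [Fin.lt_iff_val_lt_val]
      by_cases ha : a.val < i0
      · by_cases hb : b.val < i0
        · simp only [toFun, dif_pos ha, dif_pos hb]
          exact hg (show (⟨a.val, ha⟩ : Fin i0) < ⟨b.val, hb⟩ from hab')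
        · simp only [toFun, dif_pos ha, dif_neg hb]
          have := (p.1 ⟨a.val, ha⟩).isLt
          simp only [Fin.coe_castLE]
          omega
      · have hb : ¬ b.val < i0 := by omega
        simp only [toFun, dif_neg ha, dif_neg hb]
        have : p.2 ⟨a.val - i0, by have := a.isLt; omega⟩ <
            p.2 ⟨b.val - i0, by have := b.isLt; omega⟩ :=
          hh (show (⟨a.val - i0, by have := a.isLt; omega⟩ : Fin (k - i0))
              < ⟨b.val - i0, by have := b.isLt; omega⟩ by
            simp only [Fin.mk_lt_mk]; omega)
        simp only [Fin.lt_iff_val_lt_val] at this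
        omega
    simp only [Finset.mem_filter, Finset.mem_univ, true_and]
    refine ⟨hsm, ?_⟩
    rw [show (Finset.univ.filter (fun a => (toFun h2 i0 p a).val < ℓ))
        = Finset.univ.filter (fun a : Fin k => a.val < i0) from
      Finset.filter_congr (fun a _ => by simp [hval a])]
    exact card_lt_filter i0 hik
  · -- inverse map lands in product set
    intro f hf
    simp only [Finset.mem_filter, Finset.mem_univ, true_and] at hf
    obtain ⟨hsm, hc⟩ := hf
    simp only [Finset.mem_product, Finset.mem_filter, Finset.mem_univ, true_and]
    constructor
    · intro a b hab
      simp only [Fin.mk_lt_mk]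
      exact hsm (show Fin.castLE hik a < Fin.castLE hik b from hab)
    · intro a b hab
      have hga : ℓ ≤ (f ⟨i0 + a.val, by have := a.isLt; omega⟩).val := by
        have := (key f hsm hc ⟨i0 + a.val, by have := a.isLt; omega⟩).not
        simp only [not_lt] at this
        exact this.mpr (by simp)
      have hlt : (f ⟨i0 + a.val, by have := a.isLt; omega⟩).val
          < (f ⟨i0 + b.val, by have := b.isLt; omega⟩).val :=
        hsm (show (⟨i0 + a.val, by have := a.isLt; omega⟩ : Fin k)
            < ⟨i0 + b.val, by have := b.isLt; omega⟩ by
          simp only [Fin.mk_lt_mk]; exact Nat.add_lt_add_left hab i0)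
      simp only [Fin.mk_lt_mk]
      omega
  · -- back (toFun p) = p
    intro p hp
    refine Prod.ext ?_ ?_
    · funext a
      apply Fin.ext
      simp only [toFun, Fin.coe_castLE, dif_pos a.isLt, Fin.eta]
    · funext a
      apply Fin.ext
      have hne : ¬ (i0 + a.val < i0) := by omega
      simp only [toFun, dif_neg hne, Nat.add_sub_cancel_left, Fin.eta]
  · -- toFun (back f) = f
    intro f hf
    simp only [Finset.mem_filter, Finset.mem_univ, true_and] at hf
    obtain ⟨hsm, hc⟩ := hf
    funext a
    apply Fin.ext
    by_cases ha : a.val < i0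
    · simp only [toFun, dif_pos ha, Fin.coe_castLE, Fin.castLE_mk, Fin.eta]
    · simp only [toFun, dif_neg ha]
      have hge : ℓ ≤ (f ⟨i0 + (a.val - i0), by have := a.isLt; omega⟩).val := by
        have := (key f hsm hc ⟨i0 + (a.val - i0), by have := a.isLt; omega⟩).not
        simp only [not_lt] at this
        exact this.mpr (Nat.le_add_right _ _)
      simp only [Nat.add_sub_cancel' (le_of_not_gt ha), Fin.eta] at hge ⊢
      omega
  · -- values agree
    intro p hp
    rw [prod_split i0 hik (fun a => M a (toFun h2 i0 p a))]
    congr 1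
    · refine Finset.prod_congr rfl fun a _ => ?_
      congr 1
      apply Fin.ext
      simp only [toFun, Fin.coe_castLE, dif_pos a.isLt, Fin.eta]
    · refine Finset.prod_congr rfl fun a _ => ?_
      congr 1
      apply Fin.ext
      have hne : ¬ (i0 + a.val < i0) := by omega
      simp only [toFun, dif_neg hne, Nat.add_sub_cancel_left, Fin.eta]

theorem perm'_recursion {S : Type*} [CommSemiring S] (k n ℓ : ℕ)
    (h1 : 1 ≤ ℓ) (h2 : ℓ ≤ n) (M : Fin k → Fin n → S) :
    perm' M = ∑ i : Fin (k + 1),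
      perm' (fun (a : Fin i.val) (b : Fin ℓ) =>
          M (Fin.castLE i.is_le a) (Fin.castLE h2 b)) *
      perm' (fun (a : Fin (k - i.val)) (b : Fin (n - ℓ)) =>
          M ⟨i.val + a.val, by have := a.isLt; omega⟩
            ⟨ℓ + b.val, by have := b.isLt; omega⟩) := by
  classical
  have hcard : ∀ f : Fin k → Fin n,
      (Finset.univ.filter (fun a => (f a).val < ℓ)).card < k + 1 := fun f =>
    Nat.lt_succ_of_le ((Finset.card_filter_le _ _).trans (by simp))
  rw [perm', ← Finset.sum_fiberwise _ (fun f : Fin k → Fin n => (⟨_, hcard f⟩ : Fin (k+1)))]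
  refine Finset.sum_congr rfl fun i _ => ?_
  simp only [perm']
  refine (Finset.sum_congr
    (Finset.filter_congr fun f _ => by simp [Fin.ext_iff]) fun _ _ => rfl).trans
    (fiber_eq h1 h2 M i.val i.is_le)
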